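/- Let φ : L²(𝕋^d) → ℝ be C² and let φ̃(f) := φ(ρ) where ρ = ∫_V f dμ. If (Lf, Dφ̃(f)) = 0 for all f, where Lf = ∫_V f dμ − f, then conversely any C¹ function φ on L²(𝕋^d×V) satisfying (Lf, Dφ(f)) = 0 for all f depends only on ρ: φ(f) = φ(∫_V f dμ) for all f ∈ L²(𝕋^d×V). -/

import Mathlib

/-- Any `C¹` function `φ` on `L²(x,v)` satisfying `(Lf, Dφ(f)) = 0` for all `f`,
where `L f = Pf − f` and `P` is the projection `f ↦ ρ = ∫_V f dμ` onto `v`-independent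
functions, depends only on `ρ`: `φ(f) = φ(Pf)` for all `f`. -/
theorem stmt12 {E : Type*} [NormedAddCommGroup E] [NormedSpace ℝ E]
    (Pavg : E →L[ℝ] E) (hproj : Pavg.comp Pavg = Pavg)
    (φ : E → ℝ) (Dφ : E → (E →L[ℝ] ℝ))
    (hdiff : ∀ f, HasFDerivAt φ (Dφ f) f)
    (hcont : Continuous Dφ)
    (horth : ∀ f, Dφ f (Pavg f - f) = 0) :
    ∀ f, φ f = φ (Pavg f) := by
  intro f
  set w : E := Pavg f - f with hw
  set γ : ℝ → E := fun t => f + t • w with hγ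
  -- Along the path, Pavg (γ t) - γ t = (1 - t) • w
  have hPγ : ∀ t : ℝ, Pavg (γ t) - γ t = (1 - t) • w := by
    intro t
    have hPP : Pavg (Pavg f) = Pavg f := by
      have := congrArg (fun L : E →L[ℝ] E => L f) hproj
      simpa using this
    simp only [hγ, hw, map_add, map_smul, map_sub, hPP]
    module
  -- The derivative of φ along the path in direction w vanishes for t ≠ 1
  have hzero : ∀ t : ℝ, t ≠ 1 → Dφ (γ t) w = 0 := by
    intro t ht
    have h0 := horth (γ t)
    rw [hPγ t] at h0
    have h1 : (1 - t) * Dφ (γ t) w = 0 := by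
      simpa using h0
    have h2 : (1 : ℝ) - t ≠ 0 := sub_ne_zero.mpr (Ne.symm ht)
    exact (mul_eq_zero.mp h1).resolve_left h2
  -- By continuity, it vanishes for all t
  have hγc : Continuous γ := by continuity
  have hc : Continuous fun t : ℝ => Dφ (γ t) w := by
    have : Continuous fun t : ℝ => Dφ (γ t) := hcont.comp hγc
    exact (ContinuousLinearMap.apply ℝ ℝ w).continuous.comp this
  have hzero' : ∀ t : ℝ, Dφ (γ t) w = 0 := by
    intro t
    have hdense : Dense ({(1 : ℝ)}ᶜ : Set ℝ) := dense_compl_singleton 1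
    have := Continuous.ext_on hdense hc continuous_const
      (fun x hx => hzero x hx)
    exact congrFun this t
  -- φ ∘ γ has zero derivative everywhere, hence constant
  have hderiv : ∀ t : ℝ, HasDerivAt (fun t => φ (γ t)) 0 t := by
    intro t
    have hγd : HasDerivAt γ w t := by
      have : HasDerivAt (fun t : ℝ => t • w) ((1 : ℝ) • w) t :=
        (hasDerivAt_id t).smul_const w
      simpa [hγ] using (this.const_add f)
    have := (hdiff (γ t)).comp_hasDerivAt t hγd
    rw [hzero' t] at this
    exact this
  have hconst : (fun t => φ (γ t)) 0 = (fun t => φ (γ t)) 1 := by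
    have : ∀ t : ℝ, (fun t => φ (γ t)) t = (fun t => φ (γ t)) 0 := by
      intro t
      exact is_const_of_deriv_eq_zero (fun x => (hderiv x).differentiableAt)
        (fun x => (hderiv x).deriv) t 0
    rw [this 1]
  simpa [hγ, hw] using hconst
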